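/- For any positive integer k and non-negative integers d_1,...,d_k, the polynomial C̃^{d_1,...,d_k}(N) := Σ_{a_1+...+a_k = N, a_i ≥ 0} a_1^{d_1}···a_k^{d_k} has degree exactly k - 1 + Σd_i, and its leading coefficient equals (∏_{i=1}^k d_i!) / (k - 1 + Σ_{i=1}^k d_i)!. -/

import Mathlib

open Polynomial Finset


lemma hockey (b N : ℕ) : ∑ j ∈ Finset.range (N+1), j.choose b = (N+1).choose (b+1) := by
  rw [← Nat.sum_Icc_choose]
  refine (Finset.sum_subset ?_ ?_).symm
  · intro x hx; simp only [Finset.mem_Icc, Finset.mem_range] at *; omega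
  · intro x hx hnx
    simp only [Finset.mem_Icc, Finset.mem_range] at *
    exact Nat.choose_eq_zero_of_lt (by omega)

lemma choose_conv (a : ℕ) : ∀ b N : ℕ,
    ∑ ij ∈ Finset.HasAntidiagonal.antidiagonal N, (ij.1.choose a) * (ij.2.choose b) = (N+1).choose (a+b+1) := by
  induction a with
  | zero =>
    intro b N
    rw [Finset.Nat.sum_antidiagonal_eq_sum_range_succ_mk]
    simp only [Nat.choose_zero_right, one_mul]
    rw [← Finset.sum_range_reflect]
    rw [Finset.sum_congr rfl (fun j hj => by
      simp only [Finset.mem_range] at hj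
      congr 1; omega : ∀ j ∈ Finset.range (N+1), (N - (N + 1 - 1 - j)).choose b = j.choose b)]
    rw [hockey]
    norm_num
  | succ a ih =>
    intro b N
    induction N with
    | zero =>
      simp [Nat.choose_eq_zero_of_lt]
    | succ N ihN =>
      rw [Finset.Nat.sum_antidiagonal_eq_sum_range_succ_mk, Finset.sum_range_succ']
      simp only [Nat.choose_zero_right]  -- maybe not needed
      have h0 : (0:ℕ).choose (a+1) * ((N+1-0).choose b) = 0 := by simp
      rw [h0, add_zero]
      have hstep : ∀ i ∈ Finset.range (N+1),
          (i+1).choose (a+1) * ((N+1-(i+1)).choose b)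
            = i.choose a * ((N-i).choose b) + i.choose (a+1) * ((N-i).choose b) := by
        intro i hi
        have : N + 1 - (i+1) = N - i := by omega
        rw [this, Nat.choose_succ_succ, add_mul]
      rw [Finset.sum_congr rfl hstep, Finset.sum_add_distrib]
      rw [← Finset.Nat.sum_antidiagonal_eq_sum_range_succ_mk (fun ij => ij.1.choose a * ij.2.choose b),
          ← Finset.Nat.sum_antidiagonal_eq_sum_range_succ_mk (fun ij => ij.1.choose (a+1) * ij.2.choose b)]
      rw [ih b N, ihN]
      rw [show a + 1 + b + 1 = (a + b + 1) + 1 by omega, Nat.choose_succ_succ (N+1) (a+b+1)]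


noncomputable def Bp (a : ℕ) : Polynomial ℚ :=
  Polynomial.C (1 / (a.factorial : ℚ)) * descPochhammer ℚ a

lemma Bp_eval (a N : ℕ) : (Bp a).eval (N:ℚ) = (N.choose a : ℚ) := by
  have h := descPochhammer_eval_eq_descFactorial ℚ N a
  simp only [Bp, eval_mul, eval_C, h, Nat.descFactorial_eq_factorial_mul_choose]
  have : (a.factorial : ℚ) ≠ 0 := Nat.cast_ne_zero.mpr a.factorial_ne_zero
  push_cast
  field_simp

lemma Bp_natDegree (a : ℕ) : (Bp a).natDegree = a := by
  rw [Bp, natDegree_C_mul (by positivity : (1 / (a.factorial : ℚ)) ≠ 0),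
    descPochhammer_natDegree]

lemma Bp_leadingCoeff (a : ℕ) : (Bp a).leadingCoeff = 1 / (a.factorial : ℚ) := by
  rw [Bp, leadingCoeff_mul, leadingCoeff_C, (monic_descPochhammer ℚ a).leadingCoeff, mul_one]

lemma Bp_ne_zero (a : ℕ) : Bp a ≠ 0 := by
  intro h
  have h2 := Bp_leadingCoeff a
  rw [h, leadingCoeff_zero] at h2
  have h1 : (0:ℚ) < (a.factorial:ℚ) := by exact_mod_cast a.factorial_pos
  exact (one_div_pos.mpr h1).ne h2

lemma decomp (p : Polynomial ℚ) : ∃ c : ℕ → ℚ,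
    p = ∑ a ∈ Finset.range (p.natDegree + 1), Polynomial.C (c a) * Bp a ∧
    c p.natDegree = p.leadingCoeff * (p.natDegree.factorial : ℚ) := by
  generalize hn : p.natDegree = n
  induction n using Nat.strong_induction_on generalizing p with
  | _ n ih =>
  match n with
  | 0 =>
    refine ⟨fun _ => p.coeff 0, ?_, ?_⟩
    · rw [Finset.sum_range_one]
      simp [Bp, descPochhammer_zero]
      exact (Polynomial.eq_C_of_natDegree_eq_zero hn)
    · simp [Polynomial.leadingCoeff, hn]
  | (m+1) =>
    have hp0 : p ≠ 0 := fun h => by simp [h] at hn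
    set L := p.leadingCoeff with hL
    have hLne : L ≠ 0 := leadingCoeff_ne_zero.mpr hp0
    have hfact : ((m+1).factorial : ℚ) ≠ 0 := Nat.cast_ne_zero.mpr (Nat.factorial_ne_zero _)
    set T : Polynomial ℚ := Polynomial.C (L * ((m+1).factorial : ℚ)) * Bp (m+1) with hT
    have hTlc : T.leadingCoeff = L := by
      rw [hT, leadingCoeff_mul, leadingCoeff_C, Bp_leadingCoeff]
      field_simp
    have hTdeg : T.natDegree = m + 1 := by
      rw [hT, natDegree_C_mul (mul_ne_zero hLne hfact), Bp_natDegree]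
    have hTne : T ≠ 0 := fun h => by
      rw [h, leadingCoeff_zero] at hTlc; exact hLne hTlc.symm
    set q : Polynomial ℚ := p - T with hq
    have hdeg : q.degree < p.degree := by
      apply Polynomial.degree_sub_lt _ hp0 hTlc.symm
      rw [degree_eq_natDegree hp0, degree_eq_natDegree hTne, hn, hTdeg]
    have hqn : q.natDegree < m + 1 := by
      by_cases h0 : q = 0
      · simp [h0]
      · rw [← hn]; exact Polynomial.natDegree_lt_natDegree h0 hdeg
    obtain ⟨c', hc'1, hc'2⟩ := ih q.natDegree hqn q rfl
    refine ⟨fun a => if a = m + 1 then L * ((m+1).factorial : ℚ)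
        else if a < q.natDegree + 1 then c' a else 0, ?_, by simp⟩
    rw [Finset.sum_range_succ]
    have hsub : Finset.range (q.natDegree + 1) ⊆ Finset.range (m + 1) := by
      intro x hx; simp only [Finset.mem_range] at *; omega
    have hS : (∑ a ∈ Finset.range (m+1), Polynomial.C
        ((fun a => if a = m + 1 then L * ((m+1).factorial : ℚ)
          else if a < q.natDegree + 1 then c' a else 0) a) * Bp a) = q := by
      refine ((Finset.sum_subset hsub ?_).symm.trans ?_).trans hc'1.symm
      · intro x hx hnx
        simp only [Finset.mem_range] at hx hnx
        simp only [if_neg (by omega : ¬ x = m + 1), if_neg (by omega : ¬ x < q.natDegree + 1)]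
        simp
      · refine Finset.sum_congr rfl fun x hx => ?_
        simp only [Finset.mem_range] at hx
        simp only [if_neg (by omega : ¬ x = m + 1), if_pos (by omega : x < q.natDegree + 1)]
    rw [hS]
    have hlast : (Polynomial.C ((fun a => if a = m + 1 then L * ((m+1).factorial : ℚ)
          else if a < q.natDegree + 1 then c' a else 0) (m+1)) * Bp (m+1)) = T := by
      simp only [if_pos rfl, if_true]; rfl
    rw [hlast, hq]
    ring

lemma conv (p q : Polynomial ℚ) (hp : p ≠ 0) (hq : q ≠ 0) :
    ∃ r : Polynomial ℚ,
      (∀ N : ℕ, r.eval (N:ℚ) = ∑ ij ∈ Finset.HasAntidiagonal.antidiagonal N, p.eval (ij.1:ℚ) * q.eval (ij.2:ℚ)) ∧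
      r.natDegree = p.natDegree + q.natDegree + 1 ∧
      r.leadingCoeff = p.leadingCoeff * q.leadingCoeff * (p.natDegree.factorial : ℚ)
          * (q.natDegree.factorial : ℚ) / ((p.natDegree + q.natDegree + 1).factorial : ℚ) := by
  obtain ⟨c, hc1, hc2⟩ := decomp p
  obtain ⟨e, he1, he2⟩ := decomp q
  have hcne : c p.natDegree ≠ 0 := by
    rw [hc2]
    exact mul_ne_zero (leadingCoeff_ne_zero.mpr hp)
      (Nat.cast_ne_zero.mpr (Nat.factorial_ne_zero _))
  have hene : e q.natDegree ≠ 0 := by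
    rw [he2]
    exact mul_ne_zero (leadingCoeff_ne_zero.mpr hq)
      (Nat.cast_ne_zero.mpr (Nat.factorial_ne_zero _))
  have hXC : (X + 1 : Polynomial ℚ) = X + C 1 := by simp
  have hX1 : (X + 1 : Polynomial ℚ).natDegree = 1 := by rw [hXC]; exact natDegree_X_add_C 1
  have hX1lc : (X + 1 : Polynomial ℚ).leadingCoeff = 1 := by rw [hXC]; exact leadingCoeff_X_add_C 1
  have hcompdeg : ∀ m : ℕ, ((Bp m).comp (X + 1)).natDegree = m := by
    intro m
    rw [natDegree_comp, Bp_natDegree, hX1, mul_one]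
  have hcompne : ∀ m : ℕ, (Bp m).comp (X + 1) ≠ 0 := by
    intro m
    have : ((Bp m).comp (X+1)).leadingCoeff ≠ 0 := by
      rw [leadingCoeff_comp (by rw [hX1]; norm_num), hX1lc, one_pow, mul_one, Bp_leadingCoeff]
      have h1 : (0:ℚ) < (m.factorial:ℚ) := by exact_mod_cast m.factorial_pos
      exact (one_div_pos.mpr h1).ne'
    exact fun h => this (by simp [h])
  have hcomplc : ∀ m : ℕ, ((Bp m).comp (X + 1)).leadingCoeff = 1 / (m.factorial : ℚ) := by
    intro m
    rw [leadingCoeff_comp (by rw [hX1]; norm_num), hX1lc, one_pow, mul_one]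
    exact Bp_leadingCoeff m
  set s : Finset (ℕ × ℕ) := Finset.range (p.natDegree+1) ×ˢ Finset.range (q.natDegree+1) with hs
  set f : ℕ × ℕ → Polynomial ℚ :=
    fun ab => Polynomial.C (c ab.1 * e ab.2) * (Bp (ab.1 + ab.2 + 1)).comp (X + 1) with hf
  set t : ℕ × ℕ := (p.natDegree, q.natDegree) with htdef
  have ht : t ∈ s := by
    rw [hs]; simp [htdef]
  have htermdeg : (f t).natDegree = p.natDegree + q.natDegree + 1 := by
    rw [hf, natDegree_C_mul (mul_ne_zero hcne hene), hcompdeg]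
  have htermlc : (f t).leadingCoeff
      = c p.natDegree * e q.natDegree / ((p.natDegree + q.natDegree + 1).factorial : ℚ) := by
    rw [hf]
    simp only [leadingCoeff_mul, leadingCoeff_C, hcomplc]
    ring
  have htermne : f t ≠ 0 := by
    have hlcne : (f t).leadingCoeff ≠ 0 := by
      rw [htermlc]
      exact div_ne_zero (mul_ne_zero hcne hene)
        (Nat.cast_ne_zero.mpr (Nat.factorial_ne_zero _))
    exact fun h => hlcne (by simp [h])
  have hrest : (∑ ab ∈ s.erase t, f ab).degree
      < ((p.natDegree + q.natDegree + 1 : ℕ) : WithBot ℕ) := by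
    refine lt_of_le_of_lt (Polynomial.degree_sum_le _ _) ?_
    rw [Finset.sup_lt_iff (by exact WithBot.bot_lt_coe _)]
    intro ab hab
    have hab' := Finset.mem_of_mem_erase hab
    have habne := Finset.ne_of_mem_erase hab
    rw [hs] at hab'
    simp only [Finset.mem_product, Finset.mem_range] at hab'
    have hne2 : ¬(ab.1 = p.natDegree ∧ ab.2 = q.natDegree) := by
      intro ⟨h1, h2⟩
      exact habne (Prod.ext h1 h2)
    have hlt : ab.1 + ab.2 + 1 < p.natDegree + q.natDegree + 1 := by omega
    refine lt_of_le_of_lt (Polynomial.degree_le_natDegree) ?_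
    have : (f ab).natDegree < p.natDegree + q.natDegree + 1 := by
      refine lt_of_le_of_lt ?_ hlt
      rw [hf]
      refine le_trans (natDegree_mul_le) ?_
      rw [natDegree_C, hcompdeg, zero_add]
    exact_mod_cast this
  have hsplit : (∑ ab ∈ s, f ab) = f t + ∑ ab ∈ s.erase t, f ab :=
    (Finset.add_sum_erase s f ht).symm
  have hdlt : (∑ ab ∈ s.erase t, f ab).degree < (f t).degree := by
    rw [degree_eq_natDegree htermne, htermdeg]
    exact hrest
  have hrdeg : (∑ ab ∈ s, f ab).degree = (f t).degree := by
    rw [hsplit]; exact degree_add_eq_left_of_degree_lt hdlt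
  have hrlc : (∑ ab ∈ s, f ab).leadingCoeff = (f t).leadingCoeff := by
    rw [hsplit]; exact leadingCoeff_add_of_degree_lt' hdlt
  refine ⟨∑ ab ∈ s, f ab, ?_, ?_, ?_⟩
  · intro N
    have hBc : ∀ m : ℕ, ((Bp m).comp (X+1)).eval (N:ℚ) = ((N+1).choose m : ℚ) := by
      intro m
      rw [eval_comp, eval_add, eval_X, eval_one,
        show ((N:ℚ)+1) = ((N+1:ℕ):ℚ) by push_cast; ring, Bp_eval]
    have hchi : ∀ a b : ℕ, (∑ ij ∈ Finset.HasAntidiagonal.antidiagonal N,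
        (ij.1.choose a : ℚ) * (ij.2.choose b : ℚ)) = ((N+1).choose (a+b+1) : ℚ) := by
      intro a b
      have h := choose_conv a b N
      calc ∑ ij ∈ Finset.HasAntidiagonal.antidiagonal N, (ij.1.choose a : ℚ) * (ij.2.choose b : ℚ)
          = ((∑ ij ∈ Finset.HasAntidiagonal.antidiagonal N, ij.1.choose a * ij.2.choose b : ℕ) : ℚ) := by
            push_cast; rfl
        _ = _ := by rw [h]
    have hpe : ∀ i : ℕ, p.eval (i:ℚ)
        = ∑ a ∈ Finset.range (p.natDegree+1), c a * (i.choose a : ℚ) := by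
      intro i
      conv_lhs => rw [hc1]
      rw [Polynomial.eval_finset_sum]
      exact Finset.sum_congr rfl fun a _ => by rw [eval_mul, eval_C, Bp_eval]
    have hqe : ∀ i : ℕ, q.eval (i:ℚ)
        = ∑ b ∈ Finset.range (q.natDegree+1), e b * (i.choose b : ℚ) := by
      intro i
      conv_lhs => rw [he1]
      rw [Polynomial.eval_finset_sum]
      exact Finset.sum_congr rfl fun a _ => by rw [eval_mul, eval_C, Bp_eval]
    rw [Polynomial.eval_finset_sum]
    calc ∑ ab ∈ s, (f ab).eval (N:ℚ)
        = ∑ ab ∈ s, c ab.1 * e ab.2 * ((N+1).choose (ab.1+ab.2+1) : ℚ) := by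
          refine Finset.sum_congr rfl fun ab _ => ?_
          rw [hf, eval_mul, eval_C, hBc]
      _ = ∑ ab ∈ s, ∑ ij ∈ Finset.HasAntidiagonal.antidiagonal N,
            (c ab.1 * (ij.1.choose ab.1 : ℚ)) * (e ab.2 * (ij.2.choose ab.2 : ℚ)) := by
          refine Finset.sum_congr rfl fun ab _ => ?_
          rw [← hchi ab.1 ab.2, Finset.mul_sum]
          exact Finset.sum_congr rfl fun ij _ => by ring
      _ = ∑ ij ∈ Finset.HasAntidiagonal.antidiagonal N, ∑ ab ∈ s,
            (c ab.1 * (ij.1.choose ab.1 : ℚ)) * (e ab.2 * (ij.2.choose ab.2 : ℚ)) :=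
          Finset.sum_comm
      _ = ∑ ij ∈ Finset.HasAntidiagonal.antidiagonal N, p.eval (ij.1:ℚ) * q.eval (ij.2:ℚ) := by
          refine Finset.sum_congr rfl fun ij _ => ?_
          rw [hpe, hqe, Finset.sum_mul_sum, hs, Finset.sum_product]
  · rw [natDegree_eq_of_degree_eq hrdeg, htermdeg]
  · rw [hrlc, htermlc, hc2, he2]
    ring


lemma tuple_succ_sum {M : Type*} [AddCommMonoid M] (k N : ℕ) (f : (Fin (k+1) → ℕ) → M) :
    ∑ a ∈ Finset.Nat.antidiagonalTuple (k+1) N, f a =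
      ∑ ij ∈ Finset.HasAntidiagonal.antidiagonal N, ∑ b ∈ Finset.Nat.antidiagonalTuple k ij.2,
        f (Fin.cons ij.1 b) := by
  rw [← Finset.sum_sigma (Finset.HasAntidiagonal.antidiagonal N)
    (fun ij => Finset.Nat.antidiagonalTuple k ij.2) (fun x => f (Fin.cons x.1.1 x.2))]
  refine Finset.sum_nbij' (i := fun a => ⟨(a 0, ∑ i : Fin k, a i.succ), Fin.tail a⟩)
    (j := fun x => Fin.cons x.1.1 x.2) ?_ ?_ ?_ ?_ ?_
  · intro a ha
    rw [Finset.Nat.mem_antidiagonalTuple] at ha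
    rw [Finset.mem_sigma]
    constructor
    · rw [Finset.HasAntidiagonal.mem_antidiagonal]
      rw [← ha, Fin.sum_univ_succ]
    · rw [Finset.Nat.mem_antidiagonalTuple]
      exact Finset.sum_congr rfl fun i _ => rfl
  · intro x hx
    rw [Finset.mem_sigma] at hx
    obtain ⟨h1, h2⟩ := hx
    rw [Finset.HasAntidiagonal.mem_antidiagonal] at h1
    rw [Finset.Nat.mem_antidiagonalTuple] at h2
    rw [Finset.Nat.mem_antidiagonalTuple, Fin.sum_univ_succ]
    simp only [Fin.cons_zero, Fin.cons_succ]
    rw [h2, h1]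
  · intro a _
    exact Fin.cons_self_tail a
  · intro x hx
    rw [Finset.mem_sigma] at hx
    obtain ⟨h1, h2⟩ := hx
    rw [Finset.HasAntidiagonal.mem_antidiagonal] at h1
    rw [Finset.Nat.mem_antidiagonalTuple] at h2
    refine Sigma.ext ?_ ?_
    · simp only [Fin.cons_zero, Fin.cons_succ]
      rw [h2]
    · simp only [Fin.tail_cons]
      exact HEq.rfl
  · intro a _
    rw [Fin.cons_self_tail]

/-- The polynomial `C̃^{d₁,...,d_k}(N) = ∑_{a₁+...+a_k=N} ∏ aᵢ^{dᵢ}` has degree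
exactly `k - 1 + ∑ dᵢ` and leading coefficient `(∏ dᵢ!)/(k - 1 + ∑ dᵢ)!`. -/
theorem tildeC_degree_and_leadingCoeff (k : ℕ) (hk : 1 ≤ k) (d : Fin k → ℕ) :
    ∃ p : Polynomial ℚ,
      (∀ N : ℕ, p.eval (N : ℚ) =
          ∑ a ∈ Finset.Nat.antidiagonalTuple k N, ∏ i : Fin k, (a i : ℚ) ^ d i) ∧
      p.natDegree = k - 1 + ∑ i, d i ∧
      p.leadingCoeff =
        ((∏ i, (d i).factorial : ℕ) : ℚ) / (((k - 1 + ∑ i, d i).factorial : ℕ) : ℚ) := by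
  induction k with
  | zero => omega
  | succ k ih =>
    rcases Nat.eq_zero_or_pos k with hk0 | hk1
    · subst hk0
      refine ⟨Polynomial.X ^ d 0, ?_, ?_, ?_⟩
      · intro N
        rw [Finset.Nat.antidiagonalTuple_one, Finset.sum_singleton, Fin.prod_univ_one]
        simp
      · simp [Fin.sum_univ_one]
      · rw [monic_X_pow (d 0), Fin.prod_univ_one, Fin.sum_univ_one]
        norm_num
        rw [div_self (Nat.cast_ne_zero.mpr (Nat.factorial_ne_zero _))]
    · obtain ⟨q, hq1, hq2, hq3⟩ := ih hk1 (fun i => d i.succ)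
      have h1 : ((∏ i : Fin k, (d i.succ).factorial : ℕ) : ℚ) ≠ 0 := by
        rw [Nat.cast_ne_zero]
        exact Finset.prod_ne_zero_iff.mpr fun i _ => Nat.factorial_ne_zero _
      have h2 : (((k - 1 + ∑ i : Fin k, d i.succ).factorial : ℕ) : ℚ) ≠ 0 :=
        Nat.cast_ne_zero.mpr (Nat.factorial_ne_zero _)
      have hqlcne : q.leadingCoeff ≠ 0 := by rw [hq3]; exact div_ne_zero h1 h2
      have hqne : q ≠ 0 := fun h => hqlcne (by simp [h])
      have hpne : (Polynomial.X ^ d 0 : Polynomial ℚ) ≠ 0 := pow_ne_zero _ X_ne_zero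
      obtain ⟨r, hr1, hr2, hr3⟩ := conv (Polynomial.X ^ d 0) q hpne hqne
      have hXdeg : (Polynomial.X ^ d 0 : Polynomial ℚ).natDegree = d 0 := natDegree_X_pow _
      have harith : d 0 + (k - 1 + ∑ i : Fin k, d i.succ) + 1
          = k + 1 - 1 + ∑ i : Fin (k+1), d i := by
        rw [Fin.sum_univ_succ]
        omega
      refine ⟨r, ?_, ?_, ?_⟩
      · intro N
        rw [hr1, tuple_succ_sum k N (fun a => ∏ i : Fin (k+1), (a i : ℚ) ^ d i)]
        refine Finset.sum_congr rfl fun ij _ => ?_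
        rw [hq1, Finset.mul_sum]
        refine Finset.sum_congr rfl fun b _ => ?_
        rw [Fin.prod_univ_succ]
        simp only [Fin.cons_zero, Fin.cons_succ]
        rw [eval_pow, eval_X]
      · rw [hr2, hXdeg, hq2, harith]
      · rw [hr3, hq3, hXdeg, hq2, monic_X_pow (d 0), harith]
        rw [Fin.prod_univ_succ]
        have h2 : (((k - 1 + ∑ i : Fin k, d i.succ).factorial : ℕ) : ℚ) ≠ 0 :=
          Nat.cast_ne_zero.mpr (Nat.factorial_ne_zero _)
        push_cast
        field_simp
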